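/- For 0 < q < 1 and x ∈ [0,1], one has (q x √(1-x²))/√(1-qx²) + S(x) ≤ 2·√(1-x²)/√(1-qx²), where S(x) = ∫_x^1 √((1-qt²)/(1-t²)) dt. -/

import Mathlib

open Real

theorem S_sum_bound (q : ℝ) (hq0 : 0 < q) (hq1 : q < 1)
    (x : ℝ) (hx : x ∈ Set.Icc (0 : ℝ) 1) :
    q * x * Real.sqrt (1 - x ^ 2) / Real.sqrt (1 - q * x ^ 2) +
      (∫ t in x..1, Real.sqrt ((1 - q * t ^ 2) / (1 - t ^ 2))) ≤
    2 * Real.sqrt (1 - x ^ 2) / Real.sqrt (1 - q * x ^ 2) := by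
  obtain ⟨hx0, hx1⟩ := hx
  have hx2 : x ^ 2 ≤ 1 := by nlinarith
  have hqx2 : q * x ^ 2 < 1 := by nlinarith [sq_nonneg x]
  have hB : (0:ℝ) < Real.sqrt (1 - q * x ^ 2) := Real.sqrt_pos.2 (by linarith)
  set f : ℝ → ℝ := fun t => Real.sqrt ((1 - q * t ^ 2) / (1 - t ^ 2)) with hfdef
  set g : ℝ → ℝ := fun t => (1 - t) ^ (-(1/2) : ℝ) with hgdef
  -- pointwise bound
  have hpt : ∀ t ∈ Set.Icc x 1, f t ≤ g t := by
    intro t ht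
    obtain ⟨htx, ht1⟩ := ht
    have ht0 : 0 ≤ t := le_trans hx0 htx
    rcases eq_or_lt_of_le ht1 with h1 | h1
    · subst h1
      norm_num [hfdef, hgdef, Real.zero_rpow]
    · have h2 : 0 < 1 - t := by linarith
      have h3 : 0 < 1 - t ^ 2 := by nlinarith
      have key : (1 - q * t ^ 2) / (1 - t ^ 2) ≤ 1 / (1 - t) := by
        rw [div_le_div_iff₀ h3 h2]
        nlinarith [sq_nonneg t, mul_nonneg hq0.le (sq_nonneg t)]
      calc f t ≤ Real.sqrt (1 / (1 - t)) := Real.sqrt_le_sqrt key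
        _ = g t := by
            rw [hgdef, Real.sqrt_eq_rpow, one_div,
              Real.inv_rpow (by linarith), ← Real.rpow_neg (by linarith)]
  -- integrability of g
  have hgint : IntervalIntegrable g MeasureTheory.volume x 1 := by
    have h1 : IntervalIntegrable (fun s : ℝ => s ^ (-(1/2) : ℝ))
        MeasureTheory.volume (1 - x) (1 - 1) :=
      intervalIntegral.intervalIntegrable_rpow' (by norm_num)
    have h2 := h1.comp_sub_left 1
    simpa [hgdef, sub_sub_cancel] using h2
  -- integrability of f
  have hfint : IntervalIntegrable f MeasureTheory.volume x 1 := by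
    apply hgint.mono_fun'
    · have hm : Measurable f :=
        ((measurable_const.sub (measurable_const.mul (measurable_id.pow_const 2))).div
          (measurable_const.sub (measurable_id.pow_const 2))).sqrt
      exact hm.aestronglyMeasurable.restrict
    · filter_upwards [MeasureTheory.ae_restrict_mem measurableSet_uIoc] with t ht
      rw [Set.uIoc_of_le hx1] at ht
      have ht' : t ∈ Set.Icc x 1 := ⟨ht.1.le, ht.2⟩
      have : ‖f t‖ = f t := by
        rw [Real.norm_eq_abs, abs_of_nonneg (Real.sqrt_nonneg _)]
      rw [this]
      exact hpt t ht'
  -- value of the g integral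
  have hgval : (∫ t in x..1, g t) = 2 * Real.sqrt (1 - x) := by
    have h1 := intervalIntegral.integral_comp_sub_left (a := x) (b := 1)
      (fun s : ℝ => s ^ (-(1/2):ℝ)) 1
    rw [integral_rpow (Or.inl (by norm_num))] at h1
    simp only [hgdef]
    rw [h1, Real.sqrt_eq_rpow]
    norm_num [Real.zero_rpow]
    ring
  -- integral bound
  have hS : (∫ t in x..1, f t) ≤ 2 * Real.sqrt (1 - x) := by
    rw [← hgval]
    exact intervalIntegral.integral_mono_on hx1 hfint hgint hpt
  -- algebraic final bound : 2√(1-x) ≤ (2-qx)√(1-x²)/√(1-qx²)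
  have hA2 : Real.sqrt (1 - x ^ 2) ^ 2 = 1 - x ^ 2 :=
    Real.sq_sqrt (by nlinarith)
  have hB2 : Real.sqrt (1 - q * x ^ 2) ^ 2 = 1 - q * x ^ 2 :=
    Real.sq_sqrt (by linarith)
  have hC2 : Real.sqrt (1 - x) ^ 2 = 1 - x := Real.sq_sqrt (by linarith)
  have h2q : (0:ℝ) ≤ 2 - q * x := by nlinarith
  have key2 : 2 * Real.sqrt (1 - x) * Real.sqrt (1 - q * x ^ 2)
      ≤ (2 - q * x) * Real.sqrt (1 - x ^ 2) := by
    apply le_of_pow_le_pow_left₀ two_ne_zero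
      (mul_nonneg h2q (Real.sqrt_nonneg _))
    rw [mul_pow, mul_pow, mul_pow, hA2, hB2, hC2]
    nlinarith [mul_nonneg (mul_nonneg hx0 (sub_nonneg.2 hq1.le))
        (sub_nonneg.2 hx1),
      mul_nonneg (mul_nonneg (mul_nonneg (sq_nonneg (q*x)) hx0) hx0)
        (sub_nonneg.2 hx1),
      sq_nonneg (q*x), mul_nonneg hx0 (sub_nonneg.2 hq1.le)]
  have key3 : 2 * Real.sqrt (1 - x)
      ≤ (2 - q * x) * Real.sqrt (1 - x ^ 2) / Real.sqrt (1 - q * x ^ 2) :=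
    (le_div_iff₀ hB).2 key2
  have hfinal : (∫ t in x..1, f t)
      ≤ (2 - q * x) * Real.sqrt (1 - x ^ 2) / Real.sqrt (1 - q * x ^ 2) :=
    hS.trans key3
  have : q * x * Real.sqrt (1 - x ^ 2) / Real.sqrt (1 - q * x ^ 2)
      + (2 - q * x) * Real.sqrt (1 - x ^ 2) / Real.sqrt (1 - q * x ^ 2)
      = 2 * Real.sqrt (1 - x ^ 2) / Real.sqrt (1 - q * x ^ 2) := by
    rw [← add_div]
    congr 1
    ring
  linarith [hfinal]
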